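/- Let I₁, …, I₉ be the standard Spin(9)-generating self-adjoint anticommuting involutions of R¹⁶ = O², and for a point B = (x, y) ∈ S¹⁵ consider the nine vectors I₁B, …, I₉B. Then B = Σ_α λ_α I_α B where λ₁ = 2⟨x, y⟩, λ_{k+1} = −2⟨x, R_{u_k} y⟩ for the seven imaginary units u_k, and λ₉ = |x|² − |y|². In particular B lies in the linear span of I₁B, …, I₉B. -/

import Mathlib

noncomputable section

/-- The octonions, as the Cayley–Dickson double of the quaternions. -/
abbrev Octo := Quaternion ℝ × Quaternion ℝ

/-- Cayley–Dickson multiplication: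
`(h₁ + h₂e)(h₁' + h₂'e) = (h₁h₁' − conj(h₂')h₂) + (h₂·conj(h₁') + h₂'h₁)e`. -/
def omul (x y : Octo) : Octo :=
  (x.1 * y.1 - star y.2 * x.2, x.2 * star y.1 + y.2 * x.1)

/-- Octonion conjugation: `conj (h₁ + h₂e) = conj h₁ − h₂ e`. -/
def oconj (x : Octo) : Octo := (star x.1, -x.2)

/-- The associator `[x, x', x''] = (xx')x'' − x(x'x'')`. -/
def oassoc (x y z : Octo) : Octo := omul (omul x y) z - omul x (omul y z)

/-- The standard Euclidean inner product on the octonions. -/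
def oinner (x y : Octo) : ℝ := (x.1 * star y.1).re + (x.2 * star y.2).re

/-- The standard Euclidean inner product on `O² = ℝ¹⁶`. -/
def pinner (p q : Octo × Octo) : ℝ := oinner p.1 q.1 + oinner p.2 q.2

/-- The seven imaginary unit octonions `i, j, k, e, f, g, h`. -/
def octUnit : Fin 7 → Octo
  | 0 => ((⟨0, 1, 0, 0⟩ : Quaternion ℝ), 0)
  | 1 => ((⟨0, 0, 1, 0⟩ : Quaternion ℝ), 0)
  | 2 => ((⟨0, 0, 0, 1⟩ : Quaternion ℝ), 0)
  | 3 => (0, (1 : Quaternion ℝ))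
  | 4 => (0, (⟨0, 1, 0, 0⟩ : Quaternion ℝ))
  | 5 => (0, (⟨0, 0, 1, 0⟩ : Quaternion ℝ))
  | 6 => (0, (⟨0, 0, 0, 1⟩ : Quaternion ℝ))

/-- Right multiplication `R_u : O → O`, `x ↦ xu`. -/
def Rmul (u : Octo) (x : Octo) : Octo := omul x u

/-- The nine standard `Spin(9)` endomorphisms of `O² = ℝ¹⁶`:
`I₁ = [[0,Id],[Id,0]]`, `I_{k+1} = [[0,−R_{u_k}],[R_{u_k},0]]` for the seven
imaginary units `u_k`, and `I₉ = [[Id,0],[0,−Id]]`. -/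
def Ifun (α : Fin 9) (p : Octo × Octo) : Octo × Octo :=
  if h0 : α.val = 0 then (p.2, p.1)
  else if h8 : α.val = 8 then (p.1, -p.2)
  else
    (-(Rmul (octUnit ⟨α.val - 1, by have := α.isLt; omega⟩) p.2),
      Rmul (octUnit ⟨α.val - 1, by have := α.isLt; omega⟩) p.1)

lemma Ifun0 (p : Octo × Octo) : Ifun 0 p = (p.2, p.1) := rfl
lemma Ifun8 (p : Octo × Octo) : Ifun 8 p = (p.1, -p.2) := rfl
lemma IfunS (k : Fin 7) (p : Octo × Octo) :
    Ifun k.succ.castSucc p = (-(omul p.2 (octUnit k)), omul p.1 (octUnit k)) := by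
  have h : (k.succ.castSucc : Fin 9).val = k.val + 1 := rfl
  rw [Ifun]
  rw [dif_neg (by omega), dif_neg (by have := k.isLt; omega)]
  have h2 : (⟨(k.succ.castSucc : Fin 9).val - 1, by have := k.isLt; omega⟩ : Fin 7) = k := by
    ext; simp [h]
  rw [h2]; rfl

def qI : Quaternion ℝ := ⟨0, 1, 0, 0⟩
def qJ : Quaternion ℝ := ⟨0, 0, 1, 0⟩
def qK : Quaternion ℝ := ⟨0, 0, 0, 1⟩
lemma qI_re : qI.re = 0 := rfl
lemma qI_imI : qI.imI = 1 := rfl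
lemma qI_imJ : qI.imJ = 0 := rfl
lemma qI_imK : qI.imK = 0 := rfl
lemma qJ_re : qJ.re = 0 := rfl
lemma qJ_imI : qJ.imI = 0 := rfl
lemma qJ_imJ : qJ.imJ = 1 := rfl
lemma qJ_imK : qJ.imK = 0 := rfl
lemma qK_re : qK.re = 0 := rfl
lemma qK_imI : qK.imI = 0 := rfl
lemma qK_imJ : qK.imJ = 0 := rfl
lemma qK_imK : qK.imK = 1 := rfl
lemma oU0 : octUnit 0 = (qI, 0) := rfl
lemma oU1 : octUnit 1 = (qJ, 0) := rfl
lemma oU2 : octUnit 2 = (qK, 0) := rfl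
lemma oU3 : octUnit 3 = (0, 1) := rfl
lemma oU4 : octUnit 4 = (0, qI) := rfl
lemma oU5 : octUnit 5 = (0, qJ) := rfl
lemma oU6 : octUnit 6 = (0, qK) := rfl

set_option maxHeartbeats 1000000 in
/-- For `B = (x,y) ∈ S¹⁵`, one has `B = Σ_α λ_α I_α B` with `λ₁ = 2⟨x,y⟩`,
`λ_{k+1} = −2⟨x, R_{u_k} y⟩`, `λ₉ = |x|² − |y|²`; in particular `B` lies in the
span of `I₁B, …, I₉B`. -/
theorem unitNormal_mem_span (x y : Octo) (hB : pinner (x, y) (x, y) = 1) :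
    ((x, y) : Octo × Octo) =
        (2 * oinner x y) • Ifun 0 (x, y)
        + (∑ k : Fin 7,
            (-(2 * oinner x (Rmul (octUnit k) y))) • Ifun k.succ.castSucc (x, y))
        + (oinner x x - oinner y y) • Ifun 8 (x, y) ∧
      ((x, y) : Octo × Octo) ∈
        Submodule.span ℝ (Set.range fun α : Fin 9 => Ifun α (x, y)) := by
  have key : ((x, y) : Octo × Octo) =
        (2 * oinner x y) • Ifun 0 (x, y)
        + (∑ k : Fin 7,
            (-(2 * oinner x (Rmul (octUnit k) y))) • Ifun k.succ.castSucc (x, y))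
        + (oinner x x - oinner y y) • Ifun 8 (x, y) := by
    obtain ⟨xa, xb⟩ := x
    obtain ⟨ya, yb⟩ := y
    rw [Fin.sum_univ_seven]
    simp only [Ifun0, Ifun8, IfunS, oU0, oU1, oU2, oU3, oU4, oU5, oU6, omul, oinner, Rmul, pinner] at hB ⊢
    simp only [Prod.mk_add_mk, Prod.smul_mk, Prod.mk.injEq, Prod.neg_mk, Quaternion.ext_iff,
      Quaternion.re_mul, Quaternion.imI_mul, Quaternion.imJ_mul,
      Quaternion.imK_mul, Quaternion.re_star, Quaternion.imI_star,
      Quaternion.imJ_star, Quaternion.imK_star, Quaternion.re_add,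
      Quaternion.imI_add, Quaternion.imJ_add, Quaternion.imK_add,
      Quaternion.re_sub, Quaternion.imI_sub, Quaternion.imJ_sub,
      Quaternion.imK_sub, Quaternion.re_neg, Quaternion.imI_neg,
      Quaternion.imJ_neg, Quaternion.imK_neg, Quaternion.re_smul,
      Quaternion.imI_smul, Quaternion.imJ_smul, Quaternion.imK_smul,
      Quaternion.re_one, Quaternion.imI_one, Quaternion.imJ_one,
      Quaternion.imK_one, Quaternion.re_zero, Quaternion.imI_zero,
      Quaternion.imJ_zero, Quaternion.imK_zero, smul_eq_mul, qI_re, qI_imI, qI_imJ, qI_imK,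
      qJ_re, qJ_imI, qJ_imJ, qJ_imK, qK_re, qK_imI, qK_imJ, qK_imK] at hB ⊢
    generalize xa.re = a0 at hB ⊢
    generalize xa.imI = a1 at hB ⊢
    generalize xa.imJ = a2 at hB ⊢
    generalize xa.imK = a3 at hB ⊢
    generalize xb.re = b0 at hB ⊢
    generalize xb.imI = b1 at hB ⊢
    generalize xb.imJ = b2 at hB ⊢
    generalize xb.imK = b3 at hB ⊢
    generalize ya.re = c0 at hB ⊢
    generalize ya.imI = c1 at hB ⊢
    generalize ya.imJ = c2 at hB ⊢
    generalize ya.imK = c3 at hB ⊢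
    generalize yb.re = d0 at hB ⊢
    generalize yb.imI = d1 at hB ⊢
    generalize yb.imJ = d2 at hB ⊢
    generalize yb.imK = d3 at hB ⊢
    refine ⟨⟨⟨?_,?_,?_,?_⟩,?_,?_,?_,?_⟩,⟨?_,?_,?_,?_⟩,?_,?_,?_,?_⟩
    · linear_combination -a0 * hB
    · linear_combination -a1 * hB
    · linear_combination -a2 * hB
    · linear_combination -a3 * hB
    · linear_combination -b0 * hB
    · linear_combination -b1 * hB
    · linear_combination -b2 * hB
    · linear_combination -b3 * hB
    · linear_combination -c0 * hB
    · linear_combination -c1 * hB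
    · linear_combination -c2 * hB
    · linear_combination -c3 * hB
    · linear_combination -d0 * hB
    · linear_combination -d1 * hB
    · linear_combination -d2 * hB
    · linear_combination -d3 * hB

  refine ⟨key, ?_⟩
  have hm : (2 * oinner x y) • Ifun 0 (x, y)
        + (∑ k : Fin 7,
            (-(2 * oinner x (Rmul (octUnit k) y))) • Ifun k.succ.castSucc (x, y))
        + (oinner x x - oinner y y) • Ifun 8 (x, y) ∈
      Submodule.span ℝ (Set.range fun α : Fin 9 => Ifun α (x, y)) := by
    refine Submodule.add_mem _ (Submodule.add_mem _ ?_ ?_) ?_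
    · exact Submodule.smul_mem _ _ (Submodule.subset_span (Set.mem_range_self 0))
    · exact Submodule.sum_mem _ fun k _ =>
        Submodule.smul_mem _ _ (Submodule.subset_span (Set.mem_range_self k.succ.castSucc))
    · exact Submodule.smul_mem _ _ (Submodule.subset_span (Set.mem_range_self 8))
  rwa [← key] at hm
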